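/- BellCoRe attack on the q-half: if in Garner's recombination S = S_q + q·((i_q·(S_p − S_q)) mod p) the value S_p is replaced by Ŝ_p with Ŝ_p ≢ S_p (mod p), yielding Ŝ, then gcd(N, S − Ŝ) = q. -/

import Mathlib

theorem bellcore_fault_on_Sp (p q : ℕ) (hp : p.Prime) (hq : q.Prime) (hpq : p ≠ q)
    (iq : ℤ) (hiq : iq * q ≡ 1 [ZMOD (p : ℤ)])
    (Sp Sq Sphat S Shat : ℤ)
    (hfault : ¬ (Sphat ≡ Sp [ZMOD (p : ℤ)]))
    (hS : S = Sq + (q : ℤ) * ((iq * (Sp - Sq)) % (p : ℤ)))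
    (hShat : Shat = Sq + (q : ℤ) * ((iq * (Sphat - Sq)) % (p : ℤ))) :
    Int.gcd ((p : ℤ) * q) (S - Shat) = q := by
  set a : ℤ := (iq * (Sp - Sq)) % (p : ℤ) with ha
  set b : ℤ := (iq * (Sphat - Sq)) % (p : ℤ) with hb
  have hdiff : S - Shat = (q : ℤ) * (a - b) := by rw [hS, hShat]; ring
  have hnd : ¬ ((p : ℤ) ∣ (a - b)) := by
    intro hdvd
    apply hfault
    have h1 : (p : ℤ) ∣ iq * (Sp - Sq) - iq * (Sphat - Sq) := by
      have := Int.emod_emod_of_dvd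
      have h2 : (p : ℤ) ∣ (iq * (Sp - Sq) - a) := Int.dvd_self_sub_of_emod_eq rfl
      have h3 : (p : ℤ) ∣ (iq * (Sphat - Sq) - b) := Int.dvd_self_sub_of_emod_eq rfl
      have : iq * (Sp - Sq) - iq * (Sphat - Sq)
          = (iq * (Sp - Sq) - a) - (iq * (Sphat - Sq) - b) + (a - b) := by ring
      rw [this]
      exact dvd_add (dvd_sub h2 h3) hdvd
    have h4 : (p : ℤ) ∣ iq * (Sp - Sphat) := by
      have : iq * (Sp - Sphat) = iq * (Sp - Sq) - iq * (Sphat - Sq) := by ring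
      rw [this]; exact h1
    -- multiply by q to kill iq
    have h5 : (p : ℤ) ∣ (iq * q - 1) := Int.ModEq.dvd hiq.symm
    have h6 : (p : ℤ) ∣ (Sp - Sphat) := by
      have : Sp - Sphat = (q : ℤ) * (iq * (Sp - Sphat)) - (iq * q - 1) * (Sp - Sphat) := by
        ring
      rw [this]
      exact dvd_sub (Dvd.dvd.mul_left h4 _) (Dvd.dvd.mul_right h5 _)
    exact (Int.modEq_iff_dvd.mpr (by simpa using h6.neg_right)).symm
  have hcop : Int.gcd (p : ℤ) (a - b) = 1 := by
    rw [← Int.isCoprime_iff_gcd_eq_one]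
    exact ((Nat.prime_iff_prime_int.mp hp).coprime_iff_not_dvd).mpr hnd
  have : S - Shat = (a - b) * (q : ℤ) := by rw [hdiff]; ring
  rw [this, show ((p:ℤ) * q) = (p:ℤ) * (q:ℤ) from rfl, Int.gcd_mul_right, hcop]
  simp
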